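/- Let Ω/k be an extension of fields of characteristic p > 0 and let k₁, …, kₙ be intermediate fields of Ω/k, each finite and purely inseparable over k. Fix integers λ₁, …, λₙ and let K be the subfield of Ω generated by k together with the sets {x^{λᵢ} : x ∈ (kᵢ)^×} for 1 ≤ i ≤ n. Then: (i) K is a finite purely inseparable extension of k; (ii) for every tuple (x₁,…,xₙ) ∈ (k₁)^× × ⋯ × (kₙ)^×, the product x₁^{λ₁}⋯xₙ^{λₙ} lies in K, so the group (k₁)^× × ⋯ × (kₙ)^× acts k-linearly on K by (x₁,…,xₙ)·v = (x₁^{λ₁}⋯xₙ^{λₙ})·v; (iii) the only k-subspaces W of K with x₁^{λ₁}⋯xₙ^{λₙ}·W ⊆ W for all such tuples are {0} and K. In particular K is an irreducible representation of the product group of dimension [K : k]. -/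

import Mathlib

/-- Let Ω/k be an extension of fields of characteristic p > 0 and
k₁, …, kₙ intermediate fields, each finite purely inseparable over k.  Fix integers
λ₁, …, λₙ and let K be the subfield of Ω generated by k together with the sets
{x^{λᵢ} : x ∈ (kᵢ)ˣ}.  Then (i) K is finite purely inseparable over k;
(ii) the products x₁^{λ₁}⋯xₙ^{λₙ} lie in K, defining a k-linear action of
(k₁)ˣ × ⋯ × (kₙ)ˣ on K; (iii) the only invariant k-subspaces of K are {0} and K.
So K is an irreducible representation of the product group of dimension [K : k]. -/
theorem stmt_5 (p : ℕ) [Fact p.Prime] (k Ω : Type*) [Field k] [Field Ω] [Algebra k Ω]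
    [CharP k p] (n : ℕ) (ki : Fin n → IntermediateField k Ω)
    (hfin : ∀ i, FiniteDimensional k (ki i))
    (hins : ∀ i, IsPurelyInseparable k (ki i))
    (lam : Fin n → ℤ) (K : IntermediateField k Ω)
    (hK : K = IntermediateField.adjoin k
        (⋃ i, {y : Ω | ∃ x : Ω, x ∈ ki i ∧ x ≠ 0 ∧ y = x ^ lam i})) :
    (FiniteDimensional k K ∧ IsPurelyInseparable k K) ∧
    (∀ x : Fin n → Ω, (∀ i, x i ∈ ki i ∧ x i ≠ 0) → (∏ i, x i ^ lam i) ∈ K) ∧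
    (∀ W : Submodule k Ω, (∀ w ∈ W, w ∈ K) →
      (∀ x : Fin n → Ω, (∀ i, x i ∈ ki i ∧ x i ≠ 0) →
        ∀ w ∈ W, (∏ i, x i ^ lam i) * w ∈ W) →
      W = ⊥ ∨ (W : Set Ω) = (K : Set Ω)) := by
  set S : Set Ω := ⋃ i, {y : Ω | ∃ x : Ω, x ∈ ki i ∧ x ≠ 0 ∧ y = x ^ lam i} with hS
  set L : IntermediateField k Ω := ⨆ i, ki i with hL
  haveI := hfin; haveI := hins
  -- S is contained in L
  have hSL : S ⊆ (L : Set Ω) := by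
    rintro y hy
    simp only [hS, Set.mem_iUnion, Set.mem_setOf_eq] at hy
    obtain ⟨i, x, hx, hx0, rfl⟩ := hy
    exact IntermediateField.pow_mem L (le_iSup ki i hx) (lam i)
  have hKL : K ≤ L := by
    rw [hK]; exact IntermediateField.adjoin_le_iff.mpr hSL
  haveI hLfin : FiniteDimensional k L := IntermediateField.finiteDimensional_iSup_of_finite
  -- (i) finiteness
  haveI hKfin : FiniteDimensional k K := by
    haveI : FiniteDimensional k L.toSubmodule := hLfin
    have h2 : FiniteDimensional k K.toSubmodule :=
      Submodule.finiteDimensional_of_le (S₁ := K.toSubmodule) (S₂ := L.toSubmodule) hKL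
    exact h2
  -- (i) pure inseparability
  have hKins : IsPurelyInseparable k K := by
    rw [← le_perfectClosure_iff]
    rw [hK]
    apply IntermediateField.adjoin_le_iff.mpr
    rintro y hy
    simp only [hS, Set.mem_iUnion, Set.mem_setOf_eq] at hy
    obtain ⟨i, x, hx, hx0, rfl⟩ := hy
    have : x ∈ perfectClosure k Ω :=
      (le_perfectClosure_iff k Ω (ki i)).mpr (hins i) hx
    exact IntermediateField.pow_mem _ this (lam i)
  -- S ⊆ K
  have hSK : S ⊆ (K : Set Ω) := by
    rw [hK]; exact IntermediateField.subset_adjoin k S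
  -- (ii)
  have hprod : ∀ x : Fin n → Ω, (∀ i, x i ∈ ki i ∧ x i ≠ 0) → (∏ i, x i ^ lam i) ∈ K := by
    intro x hx
    apply IntermediateField.prod_mem
    intro i _
    apply hSK
    exact Set.mem_iUnion.mpr ⟨i, x i, (hx i).1, (hx i).2, rfl⟩
  refine ⟨⟨hKfin, hKins⟩, hprod, ?_⟩
  -- (iii)
  intro W hWK hWinv
  -- the algebra adjoin equals K
  have halg : (IntermediateField.adjoin k S).toSubalgebra = Algebra.adjoin k S := by
    apply IntermediateField.adjoin_toSubalgebra_of_isAlgebraic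
    intro x hx
    have hxL : x ∈ L := hSL hx
    exact (IntermediateField.isAlgebraic_iff (S := L) (x := ⟨x, hxL⟩)).mp
      (Algebra.IsAlgebraic.isAlgebraic _)
  have hmemA : ∀ a : Ω, a ∈ K ↔ a ∈ Algebra.adjoin k S := by
    intro a
    rw [hK, ← halg]
    exact Iff.rfl
  -- each element of S is a product of the given form, so multiplication by S preserves W
  have hSmul : ∀ a ∈ S, ∀ w ∈ W, a * w ∈ W := by
    intro a ha w hw
    simp only [hS, Set.mem_iUnion, Set.mem_setOf_eq] at ha
    obtain ⟨i, x, hx, hx0, rfl⟩ := ha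
    have := hWinv (fun j => if j = i then x else 1)
      (fun j => by
        by_cases h : j = i <;> simp [h, hx, hx0, IntermediateField.one_mem]) w hw
    simpa [Finset.prod_ite_eq', Finset.mem_univ] using this
  -- multiplication by any element of K preserves W
  have hAmul : ∀ a ∈ K, ∀ w ∈ W, a * w ∈ W := by
    intro a ha
    rw [hmemA] at ha
    induction ha using Algebra.adjoin_induction with
    | mem x hx => exact hSmul x hx
    | algebraMap c =>
        intro w hw
        rw [← Algebra.smul_def]
        exact W.smul_mem c hw
    | add x y hx hy ihx ihy =>
        intro w hw
        rw [add_mul]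
        exact W.add_mem (ihx w hw) (ihy w hw)
    | mul x y hx hy ihx ihy =>
        intro w hw
        rw [mul_assoc]
        exact ihx _ (ihy w hw)
  by_cases hW0 : ∀ w ∈ W, w = 0
  · left
    exact (Submodule.eq_bot_iff W).mpr hW0
  · right
    push_neg at hW0
    obtain ⟨w, hwW, hw0⟩ := hW0
    apply Set.Subset.antisymm
    · intro v hv; exact hWK v hv
    · intro v hv
      have hwK : w ∈ K := hWK w hwW
      have hvw : v * w⁻¹ ∈ K := K.mul_mem hv (K.inv_mem hwK)
      have := hAmul _ hvw w hwW
      rwa [mul_assoc, inv_mul_cancel₀ hw0, mul_one] at this
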